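/- Let D be a positive integer with D ≡ 1 (mod 4), set ϖ := (1−D)/4 ∈ ℤ and ω := (1+√D)/2 ∈ ℝ. Let x, y be integers with x ≥ 2, y ≥ 1 and x² + x·y + ϖ·y² = 1, and set ε := x + y·ω. For integers r, s put γ := r + s·ω and γ̃ := r + s·(1−ω). Then the following identities hold in ℝ: ε·γ̃ − γ = (gcd(x−1, x+ϖy) + gcd(y, x+1)·ω) · (y·r − (x+1)·s)/gcd(y, x+1), and ε·γ̃ + γ = (gcd(x+1, x+ϖy) + gcd(y, x−1)·ω) · (y·r + (1−x)·s)/gcd(y, x−1). Here all gcds are nonnegative, gcd(y, x+1) divides y·r − (x+1)·s, and gcd(y, x−1) divides y·r + (1−x)·s. -/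

import Mathlib

theorem nat_aux_gcd (a b c d : ℕ) (ha : 0 < a) (h : a * b = c * d) :
    Nat.gcd a d * c = Nat.gcd c b * a ∧ Nat.gcd a d * b = Nat.gcd c b * d := by
  set g := Nat.gcd a d with hg
  have hgpos : 0 < g := Nat.gcd_pos_of_pos_left d ha
  set a' := a / g with ha'
  set d' := d / g with hd'
  have haa : g * a' = a := Nat.mul_div_cancel' (Nat.gcd_dvd_left a d)
  have hdd : g * d' = d := Nat.mul_div_cancel' (Nat.gcd_dvd_right a d)
  have hcop : Nat.Coprime a' d' := Nat.coprime_div_gcd_div_gcd hgpos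
  have ha'pos : 0 < a' := by
    rcases Nat.eq_zero_or_pos a' with h0 | h0
    · rw [h0, mul_zero] at haa; omega
    · exact h0
  have h2 : a' * b = c * d' := by
    have hh : g * (a' * b) = g * (c * d') := by
      calc g * (a' * b) = (g * a') * b := by ring
        _ = c * d := by rw [haa, h]
        _ = c * (g * d') := by rw [hdd]
        _ = g * (c * d') := by ring
    exact Nat.eq_of_mul_eq_mul_left hgpos hh
  have hdvd : a' ∣ c := (Nat.Coprime.dvd_of_dvd_mul_right hcop) ⟨b, h2.symm⟩
  obtain ⟨c'', hc⟩ := hdvd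
  have hb : b = c'' * d' := by
    have hh : a' * b = a' * (c'' * d') := by rw [h2, hc]; ring
    exact Nat.eq_of_mul_eq_mul_left ha'pos hh
  have hgcb : Nat.gcd c b = c'' := by
    have : Nat.gcd (a' * c'') (d' * c'') = Nat.gcd a' d' * c'' := Nat.gcd_mul_right a' c'' d'
    rw [hc, hb, mul_comm c'' d', this, hcop, one_mul]
  constructor
  · rw [hgcb, hc, ← haa]; ring
  · rw [hgcb, hb, ← hdd]; ring

theorem int_aux_gcd (a b c d : ℤ) (ha : 0 < a) (hb : 0 ≤ b) (hc : 0 ≤ c) (hd : 0 ≤ d)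
    (h : a * b = c * d) :
    (Int.gcd a d : ℤ) * c = (Int.gcd c b : ℤ) * a ∧
    (Int.gcd a d : ℤ) * b = (Int.gcd c b : ℤ) * d := by
  have hna : (a.natAbs : ℤ) = a := Int.natAbs_of_nonneg ha.le
  have hnb : (b.natAbs : ℤ) = b := Int.natAbs_of_nonneg hb
  have hnc : (c.natAbs : ℤ) = c := Int.natAbs_of_nonneg hc
  have hnd : (d.natAbs : ℤ) = d := Int.natAbs_of_nonneg hd
  have h' : a.natAbs * b.natAbs = c.natAbs * d.natAbs := by
    have := congrArg Int.natAbs h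
    simpa [Int.natAbs_mul] using this
  have hapos : 0 < a.natAbs := by omega
  obtain ⟨e1, e2⟩ := nat_aux_gcd a.natAbs b.natAbs c.natAbs d.natAbs hapos h'
  have hg1 : Int.gcd a d = Nat.gcd a.natAbs d.natAbs := rfl
  have hg2 : Int.gcd c b = Nat.gcd c.natAbs b.natAbs := rfl
  constructor
  · rw [hg1, hg2, ← hnc, ← hna]; exact_mod_cast e1
  · rw [hg1, hg2, ← hnb, ← hnd]; exact_mod_cast e2

/-- Factorization identities from the proof of Lemma `lem:algebra`:
with `ε = x + y·ω`, `γ = r + s·ω`, `γ̃ = r + s·(1−ω)`, one has the two displayed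
real identities, together with the nonnegativity/divisibility facts making the
divisions exact. -/
theorem algebra_factorization_identities
    (D : ℤ) (hD : 0 < D) (hD4 : D % 4 = 1)
    (varpi : ℤ) (hv : 4 * varpi = 1 - D)
    (ω : ℝ) (hω : ω = (1 + Real.sqrt D) / 2)
    (x y : ℤ) (hx : 2 ≤ x) (hy : 1 ≤ y)
    (hunit : x ^ 2 + x * y + varpi * y ^ 2 = 1)
    (r s : ℤ) :
    ((Int.gcd y (x + 1) : ℤ) ∣ y * r - (x + 1) * s) ∧
    ((Int.gcd y (x - 1) : ℤ) ∣ y * r + (1 - x) * s) ∧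
    ((x : ℝ) + y * ω) * ((r : ℝ) + s * (1 - ω)) - ((r : ℝ) + s * ω)
      = ((Int.gcd (x - 1) (x + varpi * y) : ℝ) + (Int.gcd y (x + 1) : ℝ) * ω)
          * (((y * r - (x + 1) * s : ℤ) : ℝ) / (Int.gcd y (x + 1) : ℝ)) ∧
    ((x : ℝ) + y * ω) * ((r : ℝ) + s * (1 - ω)) + ((r : ℝ) + s * ω)
      = ((Int.gcd (x + 1) (x + varpi * y) : ℝ) + (Int.gcd y (x - 1) : ℝ) * ω)
          * (((y * r + (1 - x) * s : ℤ) : ℝ) / (Int.gcd y (x - 1) : ℝ)) := by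
  -- basic setup
  have hsq : Real.sqrt D ^ 2 = (D : ℝ) := Real.sq_sqrt (by positivity)
  have hvR : (4 : ℝ) * (varpi : ℝ) = 1 - (D : ℝ) := by exact_mod_cast hv
  have hω2 : ω ^ 2 = ω - (varpi : ℝ) := by
    rw [hω]; linear_combination hsq / 4 + hvR / 4
  set d : ℤ := -(x + varpi * y) with hdd
  have hfac1 : (x - 1) * (x + 1) = y * d := by rw [hdd]; linear_combination hunit
  have hdpos : 0 < d := by nlinarith [hfac1]
  have hfac2 : (x + 1) * (x - 1) = y * d := by linarith [hfac1, mul_comm (x-1) (x+1)]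
  obtain ⟨E1, E2⟩ := int_aux_gcd (x - 1) (x + 1) y d (by omega) (by omega) (by omega)
    hdpos.le hfac1
  obtain ⟨E3, E4⟩ := int_aux_gcd (x + 1) (x - 1) y d (by omega) (by omega) (by omega)
    hdpos.le (by rw [mul_comm (x+1) (x-1)]; exact hfac1)
  -- rewrite the gcds in the goal in terms of d
  have hgd1 : Int.gcd (x - 1) (x + varpi * y) = Int.gcd (x - 1) d := by
    rw [hdd]; unfold Int.gcd; congr 1; omega
  have hgd2 : Int.gcd (x + 1) (x + varpi * y) = Int.gcd (x + 1) d := by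
    rw [hdd]; unfold Int.gcd; congr 1; omega
  -- divisibilities
  have hdvd1 : (Int.gcd y (x + 1) : ℤ) ∣ y * r - (x + 1) * s :=
    dvd_sub ((Int.gcd_dvd_left _ _).mul_right r) ((Int.gcd_dvd_right _ _).mul_right s)
  have hdvd2 : (Int.gcd y (x - 1) : ℤ) ∣ y * r + (1 - x) * s := by
    have h1 : (Int.gcd y (x - 1) : ℤ) ∣ y * r := (Int.gcd_dvd_left _ _).mul_right r
    have h2 : (Int.gcd y (x - 1) : ℤ) ∣ (1 - x) * s := by
      have h3 : (Int.gcd y (x - 1) : ℤ) ∣ (x - 1) := Int.gcd_dvd_right _ _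
      have h4 : (1 - x : ℤ) = -(x - 1) := by ring
      rw [h4]; exact (dvd_neg.mpr h3).mul_right s
    exact dvd_add h1 h2
  have hg2pos : 0 < Int.gcd y (x + 1) := Int.gcd_pos_iff.mpr (Or.inl (by omega))
  have hg4pos : 0 < Int.gcd y (x - 1) := Int.gcd_pos_iff.mpr (Or.inl (by omega))
  have hg2ne : ((Int.gcd y (x + 1) : ℤ) : ℝ) ≠ 0 := by
    exact_mod_cast (by exact_mod_cast hg2pos.ne' : (Int.gcd y (x + 1) : ℤ) ≠ 0)
  have hg4ne : ((Int.gcd y (x - 1) : ℤ) : ℝ) ≠ 0 := by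
    exact_mod_cast (by exact_mod_cast hg4pos.ne' : (Int.gcd y (x - 1) : ℤ) ≠ 0)
  have E2' : (Int.gcd (x - 1) d : ℤ) * (x + 1) = (Int.gcd y (x + 1) : ℤ) * (-(x + varpi * y)) := by
    rw [← hdd]; exact E2
  have E4' : (Int.gcd (x + 1) d : ℤ) * (x - 1) = (Int.gcd y (x - 1) : ℤ) * (-(x + varpi * y)) := by
    rw [← hdd]; exact E4
  refine ⟨hdvd1, hdvd2, ?_, ?_⟩
  · obtain ⟨k, hk⟩ := hdvd1
    have hmul : (Int.gcd y (x + 1) : ℤ) * ((x - 1) * r + (x + varpi * y) * s)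
        = (Int.gcd y (x + 1) : ℤ) * ((Int.gcd (x - 1) d : ℤ) * k) := by
      linear_combination (-r) * E1 + s * E2' + (Int.gcd (x - 1) d : ℤ) * hk
    have hA : (x - 1) * r + (x + varpi * y) * s = (Int.gcd (x - 1) d : ℤ) * k :=
      mul_left_cancel₀ (by exact_mod_cast hg2pos.ne') hmul
    have hkR : ((y * r - (x + 1) * s : ℤ) : ℝ) / ((Int.gcd y (x + 1) : ℕ) : ℝ) = (k : ℝ) := by
      rw [hk]; push_cast
      rw [mul_div_assoc, mul_comm]
      exact div_mul_cancel₀ _ (by exact_mod_cast hg2pos.ne')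
    have hAR : ((x : ℝ) - 1) * r + ((x : ℝ) + varpi * y) * s
        = ((Int.gcd (x - 1) d : ℤ) : ℝ) * k := by exact_mod_cast hA
    have hkR2 : (y : ℝ) * r - ((x : ℝ) + 1) * s = ((Int.gcd y (x + 1) : ℤ) : ℝ) * k := by
      exact_mod_cast hk
    rw [hgd1, hkR]
    push_cast
    linear_combination (-(y : ℝ) * (s : ℝ)) * hω2 + hAR + ω * hkR2
  · obtain ⟨k, hk⟩ := hdvd2
    have hmul : (Int.gcd y (x - 1) : ℤ) * ((x + 1) * r + (x + varpi * y) * s)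
        = (Int.gcd y (x - 1) : ℤ) * ((Int.gcd (x + 1) d : ℤ) * k) := by
      linear_combination (-r) * E3 + s * E4' + (Int.gcd (x + 1) d : ℤ) * hk
    have hA : (x + 1) * r + (x + varpi * y) * s = (Int.gcd (x + 1) d : ℤ) * k :=
      mul_left_cancel₀ (by exact_mod_cast hg4pos.ne') hmul
    have hkR : ((y * r + (1 - x) * s : ℤ) : ℝ) / ((Int.gcd y (x - 1) : ℕ) : ℝ) = (k : ℝ) := by
      rw [hk]; push_cast
      rw [mul_div_assoc, mul_comm]
      exact div_mul_cancel₀ _ (by exact_mod_cast hg4pos.ne')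
    have hAR : ((x : ℝ) + 1) * r + ((x : ℝ) + varpi * y) * s
        = ((Int.gcd (x + 1) d : ℤ) : ℝ) * k := by exact_mod_cast hA
    have hkR2 : (y : ℝ) * r + (1 - (x : ℝ)) * s = ((Int.gcd y (x - 1) : ℤ) : ℝ) * k := by
      exact_mod_cast hk
    rw [hgd2, hkR]
    push_cast
    linear_combination (-(y : ℝ) * (s : ℝ)) * hω2 + hAR + ω * hkR2
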